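/- In the algebra YB_R(A_{n-1}), for every z ∈ R the elements Θ_1(z), …, Θ_n(z) pairwise commute: Θ_j(z) Θ_k(z) = Θ_k(z) Θ_j(z) for all 1 ≤ j, k ≤ n. -/

import Mathlib

namespace Stmt3

/-- `i` is in the index range `{1, …, n}`. -/
def inR (n i : ℕ) : Prop := 1 ≤ i ∧ i ≤ n

/-- The defining relations (0)–(4) of the algebra `YB_R(A_{n-1})` for elements
`h i j x` (`1 ≤ i ≠ j ≤ n`, `x ∈ R`) of an associative `R`-algebra `A`,
where `R` is a commutative `ℚ`-algebra. -/
structure YBARels (n : ℕ) (R : Type*) [CommRing R] [Algebra ℚ R]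
    {A : Type*} [Ring A] [Algebra R A] (h : ℕ → ℕ → R → A) : Prop where
  rel0 : ∀ i j (x : R), inR n i → inR n j → i ≠ j → h i j x * h j i x = 1
  rel1 : ∀ i j (x y : R), inR n i → inR n j → i ≠ j →
      h i j x * h i j y = h i j (x + y)
  rel2 : ∀ i j k l (x y : R), inR n i → inR n j → inR n k → inR n l →
      i ≠ j → i ≠ k → i ≠ l → j ≠ k → j ≠ l → k ≠ l →
      h i j x * h k l y = h k l y * h i j x
  rel3a : ∀ i j k (x y : R), 1 ≤ i → i < j → j < k → k ≤ n →
      h i j x * h j k y + h i k (x + y) = h j k y * h i k x + h i k y * h i j x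
  rel3b : ∀ i j k (x y : R), 1 ≤ i → i < j → j < k → k ≤ n →
      h j k y * h i j x + h i k (x + y) = h i k x * h j k y + h i j x * h i k y
  rel4 : ∀ i j k (x y : R), 1 ≤ i → i < j → j < k → k ≤ n →
      h i k x * (h i j x - h i k y) * h i j y = h i j y * (h i j x - h i k y) * h i k x

/-- The multiplicative (RSM) Dunkl element
`Θ_j(z) = h_{j-1,j}(z)⁻¹ ⋯ h_{1,j}(z)⁻¹ · h_{j,n}(z) ⋯ h_{j,j+1}(z)`,
where `h_{ij}(z)⁻¹ = h_{ij}(-z)`. -/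
def ThetaA (n : ℕ) {R : Type*} [CommRing R] {A : Type*} [Ring A]
    (h : ℕ → ℕ → R → A) (z : R) (j : ℕ) : A :=
  ((List.range' 1 (j - 1)).reverse.map fun i => h i j (-z)).prod *
    ((List.range' (j + 1) (n - j)).reverse.map fun k => h j k z).prod

/-! ### Auxiliary list-product machinery -/

section ListAux

variable {A : Type*} [Ring A]

lemma commute_list_prod (x : A) (l : List ℕ) (f : ℕ → A)
    (H : ∀ m ∈ l, x * f m = f m * x) :
    x * (l.map f).prod = (l.map f).prod * x := by
  induction l with
  | nil => simp
  | cons a t ih =>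
    simp only [List.map_cons, List.prod_cons, ← mul_assoc]
    rw [H a (by simp), mul_assoc, ih fun m hm => H m (by simp [hm]), ← mul_assoc]

lemma blocks_comm (l1 l2 : List ℕ) (f g : ℕ → A)
    (H : ∀ a ∈ l1, ∀ b ∈ l2, f a * g b = g b * f a) :
    (l1.map f).prod * (l2.map g).prod = (l2.map g).prod * (l1.map f).prod := by
  induction l1 with
  | nil => simp
  | cons a t ih =>
    simp only [List.map_cons, List.prod_cons]
    calc f a * (t.map f).prod * (l2.map g).prod
        = f a * ((t.map f).prod * (l2.map g).prod) := by simp only [mul_assoc]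
      _ = f a * ((l2.map g).prod * (t.map f).prod) := by
            rw [ih fun a ha b hb => H a (by simp [ha]) b hb]
      _ = (f a * (l2.map g).prod) * (t.map f).prod := by simp only [mul_assoc]
      _ = ((l2.map g).prod * f a) * (t.map f).prod := by
            rw [commute_list_prod (f a) l2 g fun b hb => H a (by simp) b hb]
      _ = (l2.map g).prod * (f a * (t.map f).prod) := by simp only [mul_assoc]

lemma zip_prod (l : List ℕ) (p q : ℕ → A)
    (H : l.Pairwise fun m m' => q m * p m' = p m' * q m) :
    (l.map p).prod * (l.map q).prod = (l.map fun m => p m * q m).prod := by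
  induction l with
  | nil => simp
  | cons a t ih =>
    rw [List.pairwise_cons] at H
    simp only [List.map_cons, List.prod_cons]
    have hc : (t.map p).prod * q a = q a * (t.map p).prod :=
      (commute_list_prod (q a) t p fun m hm => H.1 m hm).symm
    calc p a * (t.map p).prod * (q a * (t.map q).prod)
        = p a * (((t.map p).prod * q a) * (t.map q).prod) := by simp only [mul_assoc]
      _ = p a * ((q a * (t.map p).prod) * (t.map q).prod) := by rw [hc]
      _ = (p a * q a) * ((t.map p).prod * (t.map q).prod) := by simp only [mul_assoc]
      _ = (p a * q a) * (t.map fun m => p m * q m).prod := by rw [ih H.2]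

lemma push_left (g : A) (l : List ℕ) (p q : ℕ → A)
    (H : ∀ m ∈ l, g * (p m * q m) = (q m * p m) * g) :
    g * (l.map fun m => p m * q m).prod = (l.map fun m => q m * p m).prod * g := by
  induction l with
  | nil => simp
  | cons a t ih =>
    simp only [List.map_cons, List.prod_cons]
    calc g * ((p a * q a) * (t.map fun m => p m * q m).prod)
        = (g * (p a * q a)) * (t.map fun m => p m * q m).prod := by simp only [mul_assoc]
      _ = ((q a * p a) * g) * (t.map fun m => p m * q m).prod := by rw [H a (by simp)]
      _ = (q a * p a) * (g * (t.map fun m => p m * q m).prod) := by simp only [mul_assoc]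
      _ = (q a * p a) * ((t.map fun m => q m * p m).prod * g) := by
            rw [ih fun m hm => H m (by simp [hm])]
      _ = (q a * p a) * (t.map fun m => q m * p m).prod * g := by simp only [mul_assoc]

lemma push_right (g : A) (l : List ℕ) (p q : ℕ → A)
    (H : ∀ m ∈ l, (p m * q m) * g = g * (q m * p m)) :
    (l.map fun m => p m * q m).prod * g = g * (l.map fun m => q m * p m).prod := by
  induction l with
  | nil => simp
  | cons a t ih =>
    simp only [List.map_cons, List.prod_cons]
    calc (p a * q a) * (t.map fun m => p m * q m).prod * g
        = (p a * q a) * ((t.map fun m => p m * q m).prod * g) := by simp only [mul_assoc]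
      _ = (p a * q a) * (g * (t.map fun m => q m * p m).prod) := by
            rw [ih fun m hm => H m (by simp [hm])]
      _ = ((p a * q a) * g) * (t.map fun m => q m * p m).prod := by simp only [mul_assoc]
      _ = (g * (q a * p a)) * (t.map fun m => q m * p m).prod := by rw [H a (by simp)]
      _ = g * ((q a * p a) * (t.map fun m => q m * p m).prod) := by simp only [mul_assoc]

lemma theta_core (Lo I Hi : List ℕ) (g g' : A) (uj ak bk vk dj ej : ℕ → A)
    (hgg' : g * g' = 1) (hg'g : g' * g = 1)
    (hx1 : ∀ m ∈ I, g * (ej m * ak m) = (ak m * ej m) * g)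
    (hx2 : ∀ i ∈ Lo, g' * (bk i * uj i) = (uj i * bk i) * g')
    (hx3 : ∀ m ∈ Hi, (vk m * dj m) * g = g * (dj m * vk m))
    (pI : I.Pairwise fun m m' => (ak m * ej m' = ej m' * ak m) ∧ (ej m * ak m' = ak m' * ej m))
    (pLo : Lo.Pairwise fun i i' => (uj i * bk i' = bk i' * uj i) ∧ (bk i * uj i' = uj i' * bk i))
    (pHi : Hi.Pairwise fun m m' => (dj m * vk m' = vk m' * dj m) ∧ (vk m * dj m' = dj m' * vk m))
    (cEB : ∀ m ∈ I, ∀ i ∈ Lo, ej m * bk i = bk i * ej m)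
    (cEV : ∀ m ∈ I, ∀ m' ∈ Hi, ej m * vk m' = vk m' * ej m)
    (cVU : ∀ m ∈ Hi, ∀ i ∈ Lo, vk m * uj i = uj i * vk m)
    (cAU : ∀ m ∈ I, ∀ i ∈ Lo, ak m * uj i = uj i * ak m)
    (cBD : ∀ i ∈ Lo, ∀ m ∈ Hi, bk i * dj m = dj m * bk i)
    (cAD : ∀ m ∈ I, ∀ m' ∈ Hi, ak m * dj m' = dj m' * ak m) :
    ((Lo.map uj).prod * ((Hi.map dj).prod * g * (I.map ej).prod)) *
      (((I.map ak).prod * g' * (Lo.map bk).prod) * (Hi.map vk).prod) =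
    (((I.map ak).prod * g' * (Lo.map bk).prod) * (Hi.map vk).prod) *
      ((Lo.map uj).prod * ((Hi.map dj).prod * g * (I.map ej).prod)) := by
  have zipEA : (I.map ej).prod * (I.map ak).prod = (I.map fun m => ej m * ak m).prod :=
    zip_prod I ej ak (pI.imp fun hp => hp.1)
  have zipAE : (I.map ak).prod * (I.map ej).prod = (I.map fun m => ak m * ej m).prod :=
    zip_prod I ak ej (pI.imp fun hp => hp.2)
  have pushE : g * (I.map fun m => ej m * ak m).prod =
      (I.map fun m => ak m * ej m).prod * g := push_left g I ej ak hx1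
  have zipBU : (Lo.map bk).prod * (Lo.map uj).prod = (Lo.map fun i => bk i * uj i).prod :=
    zip_prod Lo bk uj (pLo.imp fun hp => hp.1)
  have zipUB : (Lo.map uj).prod * (Lo.map bk).prod = (Lo.map fun i => uj i * bk i).prod :=
    zip_prod Lo uj bk (pLo.imp fun hp => hp.2)
  have pushLo : g' * (Lo.map fun i => bk i * uj i).prod =
      (Lo.map fun i => uj i * bk i).prod * g' := push_left g' Lo bk uj hx2
  have zipVD : (Hi.map vk).prod * (Hi.map dj).prod = (Hi.map fun m => vk m * dj m).prod :=
    zip_prod Hi vk dj (pHi.imp fun hp => hp.1)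
  have zipDV : (Hi.map dj).prod * (Hi.map vk).prod = (Hi.map fun m => dj m * vk m).prod :=
    zip_prod Hi dj vk (pHi.imp fun hp => hp.2)
  have pushHi : (Hi.map fun m => vk m * dj m).prod * g =
      g * (Hi.map fun m => dj m * vk m).prod := push_right g Hi vk dj hx3
  have bEB : (I.map ej).prod * (Lo.map bk).prod = (Lo.map bk).prod * (I.map ej).prod :=
    blocks_comm I Lo ej bk cEB
  have bEV : (I.map ej).prod * (Hi.map vk).prod = (Hi.map vk).prod * (I.map ej).prod :=
    blocks_comm I Hi ej vk cEV
  have bVU : (Hi.map vk).prod * (Lo.map uj).prod = (Lo.map uj).prod * (Hi.map vk).prod :=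
    blocks_comm Hi Lo vk uj cVU
  have bAU : (I.map ak).prod * (Lo.map uj).prod = (Lo.map uj).prod * (I.map ak).prod :=
    blocks_comm I Lo ak uj cAU
  have bBD : (Lo.map bk).prod * (Hi.map dj).prod = (Hi.map dj).prod * (Lo.map bk).prod :=
    blocks_comm Lo Hi bk dj cBD
  have bAD : (I.map ak).prod * (Hi.map dj).prod = (Hi.map dj).prod * (I.map ak).prod :=
    blocks_comm I Hi ak dj cAD
  set U := (Lo.map uj).prod with hU
  set D := (Hi.map dj).prod with hD
  set E := (I.map ej).prod with hE
  set Aq := (I.map ak).prod with hAq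
  set B := (Lo.map bk).prod with hB
  set V := (Hi.map vk).prod with hV
  set W1 := (I.map fun m => ej m * ak m).prod with hW1
  set W2 := (I.map fun m => ak m * ej m).prod with hW2
  set W3 := (Lo.map fun i => bk i * uj i).prod with hW3
  set W4 := (Lo.map fun i => uj i * bk i).prod with hW4
  set W5 := (Hi.map fun m => vk m * dj m).prod with hW5
  set W6 := (Hi.map fun m => dj m * vk m).prod with hW6
  have hL : (U * (D * g * E)) * ((Aq * g' * B) * V) = U * (D * (Aq * (B * (V * E)))) := by
    calc (U * (D * g * E)) * ((Aq * g' * B) * V)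
        = U * D * ((g * (E * Aq)) * g') * (B * V) := by simp only [mul_assoc]
      _ = U * D * ((g * W1) * g') * (B * V) := by rw [zipEA]
      _ = U * D * ((W2 * g) * g') * (B * V) := by rw [pushE]
      _ = U * D * (W2 * (g * g')) * (B * V) := by simp only [mul_assoc]
      _ = U * D * (W2 * 1) * (B * V) := by rw [hgg']
      _ = U * D * W2 * (B * V) := by rw [mul_one]
      _ = U * D * (Aq * E) * (B * V) := by rw [zipAE]
      _ = U * (D * (Aq * ((E * B) * V))) := by simp only [mul_assoc]
      _ = U * (D * (Aq * ((B * E) * V))) := by rw [bEB]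
      _ = U * (D * (Aq * (B * (E * V)))) := by simp only [mul_assoc]
      _ = U * (D * (Aq * (B * (V * E)))) := by rw [bEV]
  have hR : ((Aq * g' * B) * V) * (U * (D * g * E)) = U * (D * (Aq * (B * (V * E)))) := by
    calc ((Aq * g' * B) * V) * (U * (D * g * E))
        = Aq * g' * B * ((V * U) * (D * g * E)) := by simp only [mul_assoc]
      _ = Aq * g' * B * ((U * V) * (D * g * E)) := by rw [bVU]
      _ = Aq * (g' * (B * U)) * (((V * D)) * g) * E := by simp only [mul_assoc]
      _ = Aq * (g' * W3) * ((V * D) * g) * E := by rw [zipBU]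
      _ = Aq * (g' * W3) * (W5 * g) * E := by rw [zipVD]
      _ = Aq * (W4 * g') * (W5 * g) * E := by rw [pushLo]
      _ = Aq * (W4 * g') * (g * W6) * E := by rw [pushHi]
      _ = Aq * ((U * B) * g') * (g * W6) * E := by rw [zipUB]
      _ = Aq * ((U * B) * g') * (g * (D * V)) * E := by rw [zipDV]
      _ = Aq * U * B * (g' * g) * (D * (V * E)) := by simp only [mul_assoc]
      _ = Aq * U * B * 1 * (D * (V * E)) := by rw [hg'g]
      _ = Aq * U * ((B * D) * (V * E)) := by rw [mul_one]; simp only [mul_assoc]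
      _ = Aq * U * ((D * B) * (V * E)) := by rw [bBD]
      _ = (Aq * U) * (D * (B * (V * E))) := by simp only [mul_assoc]
      _ = (U * Aq) * (D * (B * (V * E))) := by rw [bAU]
      _ = U * ((Aq * D) * (B * (V * E))) := by simp only [mul_assoc]
      _ = U * ((D * Aq) * (B * (V * E))) := by rw [bAD]
      _ = U * (D * (Aq * (B * (V * E)))) := by simp only [mul_assoc]
  exact hL.trans hR.symm

end ListAux

/-! ### Consequences of the defining relations -/

lemma braid_core {A : Type*} [Ring A] (a b c b2 : A)
    (e1 : a * c + b2 = c * b + b * a) (e2 : c * a + b2 = b * c + a * b)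
    (hb2 : b2 = b * b)
    (e4 : b * (a - b) * a = a * (a - b) * b) : a * b * c = c * b * a := by
  subst hb2
  have hX : b * c = c * a + b * b - a * b := by rw [e2, add_sub_cancel_right]
  have hY : c * b = a * c + b * b - b * a := by rw [e1, add_sub_cancel_right]
  have key : a * b * c - c * b * a =
      a * (b * c - (c * a + b * b - a * b)) - (c * b - (a * c + b * b - b * a)) * a
        + (b * (a - b) * a - a * (a - b) * b) := by noncomm_ring
  have z1 : b * c - (c * a + b * b - a * b) = 0 := by rw [hX]; exact sub_self _
  have z2 : c * b - (a * c + b * b - b * a) = 0 := by rw [hY]; exact sub_self _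
  have z3 : b * (a - b) * a - a * (a - b) * b = 0 := by rw [e4]; exact sub_self _
  have final : a * b * c - c * b * a = 0 := by rw [key, z1, z2, z3]; simp
  exact sub_eq_zero.mp final

section Alg

variable {n : ℕ} {R : Type*} [CommRing R] [Algebra ℚ R]
  {A : Type*} [Ring A] [Algebra R A] {h : ℕ → ℕ → R → A}

lemma h_zero (rels : YBARels n R h) {i j : ℕ} (hi : inR n i) (hj : inR n j)
    (hij : i ≠ j) : h i j 0 = 1 := by
  have e : h i j 0 * h i j 0 = h i j 0 := by
    have := rels.rel1 i j 0 0 hi hj hij; simpa using this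
  have e0 := rels.rel0 i j 0 hi hj hij
  calc h i j 0 = h i j 0 * (h i j 0 * h j i 0) := by rw [e0, mul_one]
    _ = (h i j 0 * h i j 0) * h j i 0 := by rw [mul_assoc]
    _ = h i j 0 * h j i 0 := by rw [e]
    _ = 1 := e0

lemma h_inv (rels : YBARels n R h) {i j : ℕ} (x : R) (hi : inR n i) (hj : inR n j)
    (hij : i ≠ j) : h i j x * h i j (-x) = 1 := by
  rw [rels.rel1 i j x (-x) hi hj hij, add_neg_cancel, h_zero rels hi hj hij]

lemma h_inv' (rels : YBARels n R h) {i j : ℕ} (x : R) (hi : inR n i) (hj : inR n j)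
    (hij : i ≠ j) : h i j (-x) * h i j x = 1 := by
  rw [rels.rel1 i j (-x) x hi hj hij, neg_add_cancel, h_zero rels hi hj hij]

lemma braid (rels : YBARels n R h) {i j k : ℕ} (x : R)
    (h1 : 1 ≤ i) (h2 : i < j) (h3 : j < k) (h4 : k ≤ n) :
    h i j x * h i k x * h j k x = h j k x * h i k x * h i j x := by
  have hi : inR n i := ⟨h1, by omega⟩
  have hk' : inR n k := ⟨by omega, h4⟩
  exact braid_core (h i j x) (h i k x) (h j k x) (h i k (x + x))
    (rels.rel3a i j k x x h1 h2 h3 h4)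
    (rels.rel3b i j k x x h1 h2 h3 h4)
    ((rels.rel1 i k x x hi hk' (by omega)).symm)
    (rels.rel4 i j k x x h1 h2 h3 h4)

lemma hconj (rels : YBARels n R h) {i j k : ℕ} (x : R)
    (h1 : 1 ≤ i) (h2 : i < j) (h3 : j < k) (h4 : k ≤ n) :
    h i k x * h i j x * h j k (-x) = h j k (-x) * h i j x * h i k x := by
  have hj' : inR n j := ⟨by omega, by omega⟩
  have hk' : inR n k := ⟨by omega, h4⟩
  have i1 : h j k x * h j k (-x) = 1 := h_inv rels x hj' hk' (by omega)
  have i2 : h j k (-x) * h j k x = 1 := h_inv' rels x hj' hk' (by omega)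
  have hbr := braid rels x h1 h2 h3 h4
  calc h i k x * h i j x * h j k (-x)
      = (h j k (-x) * h j k x) * (h i k x * h i j x * h j k (-x)) := by
        rw [i2, one_mul]
    _ = h j k (-x) * ((h j k x * h i k x * h i j x) * h j k (-x)) := by
        simp only [mul_assoc]
    _ = h j k (-x) * ((h i j x * h i k x * h j k x) * h j k (-x)) := by rw [← hbr]
    _ = h j k (-x) * (h i j x * (h i k x * (h j k x * h j k (-x)))) := by
        simp only [mul_assoc]
    _ = h j k (-x) * h i j x * h i k x := by rw [i1, mul_one, ← mul_assoc]

end Alg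

lemma range'_split {s len m : ℕ} (h1 : s ≤ m) (h2 : m < s + len) :
    List.range' s len = List.range' s (m - s) ++ m :: List.range' (m + 1) (s + len - m - 1) := by
  have e1 : s + 1 * (m - s) = m := by omega
  have h3 := List.range'_append (s := s) (m := m - s) (n := s + len - m) (step := 1)
  rw [e1] at h3
  have e3 : m - s + (s + len - m) = len := by omega
  rw [e3] at h3
  have e2 : s + len - m = (s + len - m - 1) + 1 := by omega
  rw [← h3, e2, List.range'_succ]; simp

section Key

variable {n : ℕ} {R : Type*} [CommRing R] [Algebra ℚ R]
  {A : Type*} [Ring A] [Algebra R A] {h : ℕ → ℕ → R → A}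

lemma theta_comm_of_lt (rels : YBARels n R h) (z : R) {j k : ℕ}
    (hj : inR n j) (hk : inR n k) (hjk : j < k) :
    ThetaA n h z j * ThetaA n h z k = ThetaA n h z k * ThetaA n h z j := by
  obtain ⟨hj1, hjn⟩ := hj
  obtain ⟨hk1, hkn⟩ := hk
  -- range splits
  have sV : List.range' (j + 1) (n - j)
      = List.range' (j + 1) (k - j - 1) ++ k :: List.range' (k + 1) (n - k) := by
    have hs := range'_split (s := j + 1) (len := n - j) (m := k) (by omega) (by omega)
    rw [show k - (j + 1) = k - j - 1 by omega,
      show j + 1 + (n - j) - k - 1 = n - k by omega] at hs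
    exact hs
  have sU : List.range' 1 (k - 1)
      = List.range' 1 (j - 1) ++ j :: List.range' (j + 1) (k - j - 1) := by
    have hs := range'_split (s := 1) (len := k - 1) (m := j) (by omega) (by omega)
    rw [show j - 1 = j - 1 by rfl, show 1 + (k - 1) - j - 1 = k - j - 1 by omega] at hs
    exact hs
  -- membership bounds
  have memI : ∀ m ∈ (List.range' (j + 1) (k - j - 1)).reverse, j + 1 ≤ m ∧ m ≤ k - 1 := by
    intro m hm; rw [List.mem_reverse, List.mem_range'_1] at hm; omega
  have memLo : ∀ i ∈ (List.range' 1 (j - 1)).reverse, 1 ≤ i ∧ i ≤ j - 1 := by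
    intro i hi; rw [List.mem_reverse, List.mem_range'_1] at hi; omega
  have memHi : ∀ m ∈ (List.range' (k + 1) (n - k)).reverse, k + 1 ≤ m ∧ m ≤ n := by
    intro m hm; rw [List.mem_reverse, List.mem_range'_1] at hm; omega
  have ndI : ((List.range' (j + 1) (k - j - 1)).reverse).Nodup :=
    List.nodup_reverse.mpr (List.nodup_range' 1 (by omega))
  have ndLo : ((List.range' 1 (j - 1)).reverse).Nodup :=
    List.nodup_reverse.mpr (List.nodup_range' 1 (by omega))
  have ndHi : ((List.range' (k + 1) (n - k)).reverse).Nodup :=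
    List.nodup_reverse.mpr (List.nodup_range' 1 (by omega))
  -- locality helper
  have loc : ∀ a b c d : ℕ, ∀ x y : R, 1 ≤ a → a ≤ n → 1 ≤ b → b ≤ n → 1 ≤ c → c ≤ n →
      1 ≤ d → d ≤ n → a ≠ b → a ≠ c → a ≠ d → b ≠ c → b ≠ d → c ≠ d →
      h a b x * h c d y = h c d y * h a b x := by
    intro a b c d x y ha1 ha2 hb1 hb2 hc1 hc2 hd1 hd2 e1 e2 e3 e4 e5 e6
    exact rels.rel2 a b c d x y ⟨ha1, ha2⟩ ⟨hb1, hb2⟩ ⟨hc1, hc2⟩ ⟨hd1, hd2⟩ e1 e2 e3 e4 e5 e6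
  have core := theta_core (A := A)
    ((List.range' 1 (j - 1)).reverse)
    ((List.range' (j + 1) (k - j - 1)).reverse)
    ((List.range' (k + 1) (n - k)).reverse)
    (h j k z) (h j k (-z))
    (fun i => h i j (-z))   -- uj
    (fun m => h m k (-z))   -- ak
    (fun i => h i k (-z))   -- bk
    (fun m => h k m z)      -- vk
    (fun m => h j m z)      -- dj
    (fun m => h j m z)      -- ej
    (h_inv rels z ⟨hj1, hjn⟩ ⟨hk1, hkn⟩ (by omega))
    (h_inv' rels z ⟨hj1, hjn⟩ ⟨hk1, hkn⟩ (by omega))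
    (by -- hx1
      intro m hm
      have hb := memI m hm
      have := hconj rels (i := j) (j := m) (k := k) z hj1 (by omega) (by omega) hkn
      simp only [mul_assoc] at this ⊢
      exact this)
    (by -- hx2
      intro i hi
      have hb := memLo i hi
      have := (braid rels (i := i) (j := j) (k := k) (-z) (by omega) (by omega) hjk hkn).symm
      simp only [mul_assoc] at this ⊢
      exact this)
    (by -- hx3
      intro m hm
      have hb := memHi m hm
      have := (braid rels (i := j) (j := k) (k := m) z hj1 hjk (by omega) (by omega)).symm
      simp only [mul_assoc] at this ⊢
      exact this)
    (ndI.pairwise_of_forall_ne (by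
      intro a ha b hb hab
      have h1 := memI a ha; have h2 := memI b hb
      constructor
      · exact loc a k j b (-z) z (by omega) (by omega) (by omega) (by omega) (by omega)
          (by omega) (by omega) (by omega) (by omega) (by omega) (by omega) (by omega)
          (by omega) (by omega)
      · exact loc j a b k z (-z) (by omega) (by omega) (by omega) (by omega) (by omega)
          (by omega) (by omega) (by omega) (by omega) (by omega) (by omega) (by omega)
          (by omega) (by omega)))
    (ndLo.pairwise_of_forall_ne (by
      intro a ha b hb hab
      have h1 := memLo a ha; have h2 := memLo b hb
      constructor
      · exact loc a j b k (-z) (-z) (by omega) (by omega) (by omega) (by omega) (by omega)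
          (by omega) (by omega) (by omega) (by omega) (by omega) (by omega) (by omega)
          (by omega) (by omega)
      · exact loc a k b j (-z) (-z) (by omega) (by omega) (by omega) (by omega) (by omega)
          (by omega) (by omega) (by omega) (by omega) (by omega) (by omega) (by omega)
          (by omega) (by omega)))
    (ndHi.pairwise_of_forall_ne (by
      intro a ha b hb hab
      have h1 := memHi a ha; have h2 := memHi b hb
      constructor
      · exact loc j a k b z z (by omega) (by omega) (by omega) (by omega) (by omega)
          (by omega) (by omega) (by omega) (by omega) (by omega) (by omega) (by omega)
          (by omega) (by omega)
      · exact loc k a j b z z (by omega) (by omega) (by omega) (by omega) (by omega)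
          (by omega) (by omega) (by omega) (by omega) (by omega) (by omega) (by omega)
          (by omega) (by omega)))
    (by -- cEB
      intro m hm i hi
      have h1 := memI m hm; have h2 := memLo i hi
      exact loc j m i k z (-z) (by omega) (by omega) (by omega) (by omega) (by omega)
        (by omega) (by omega) (by omega) (by omega) (by omega) (by omega) (by omega)
        (by omega) (by omega))
    (by -- cEV
      intro m hm m' hm'
      have h1 := memI m hm; have h2 := memHi m' hm'
      exact loc j m k m' z z (by omega) (by omega) (by omega) (by omega) (by omega)
        (by omega) (by omega) (by omega) (by omega) (by omega) (by omega) (by omega)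
        (by omega) (by omega))
    (by -- cVU
      intro m hm i hi
      have h1 := memHi m hm; have h2 := memLo i hi
      exact loc k m i j z (-z) (by omega) (by omega) (by omega) (by omega) (by omega)
        (by omega) (by omega) (by omega) (by omega) (by omega) (by omega) (by omega)
        (by omega) (by omega))
    (by -- cAU
      intro m hm i hi
      have h1 := memI m hm; have h2 := memLo i hi
      exact loc m k i j (-z) (-z) (by omega) (by omega) (by omega) (by omega) (by omega)
        (by omega) (by omega) (by omega) (by omega) (by omega) (by omega) (by omega)
        (by omega) (by omega))
    (by -- cBD
      intro i hi m hm
      have h1 := memLo i hi; have h2 := memHi m hm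
      exact loc i k j m (-z) z (by omega) (by omega) (by omega) (by omega) (by omega)
        (by omega) (by omega) (by omega) (by omega) (by omega) (by omega) (by omega)
        (by omega) (by omega))
    (by -- cAD
      intro m hm m' hm'
      have h1 := memI m hm; have h2 := memHi m' hm'
      exact loc m k j m' (-z) z (by omega) (by omega) (by omega) (by omega) (by omega)
        (by omega) (by omega) (by omega) (by omega) (by omega) (by omega) (by omega)
        (by omega) (by omega))
  simp only [ThetaA]
  rw [sV, sU]
  simp only [List.reverse_append, List.reverse_cons, List.map_append, List.map_cons,
    List.map_nil, List.prod_append, List.prod_cons, List.prod_nil, List.reverse_nil,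
    List.nil_append, List.append_nil, mul_one, one_mul]
  simp only [mul_assoc] at core ⊢
  exact core

end Key

/-- in `YB_R(A_{n-1})`, for every `z ∈ R` the elements
`Θ_1(z), …, Θ_n(z)` pairwise commute. -/
theorem RSM_elements_commute_in_YBA (n : ℕ) (hn : 2 ≤ n)
    (R : Type*) [CommRing R] [Algebra ℚ R] (A : Type*) [Ring A] [Algebra R A]
    (h : ℕ → ℕ → R → A) (rels : YBARels n R h) :
    ∀ (z : R) (j k : ℕ), inR n j → inR n k →
      ThetaA n h z j * ThetaA n h z k = ThetaA n h z k * ThetaA n h z j := by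
  intro z j k hj hk
  rcases Nat.lt_trichotomy j k with hlt | heq | hgt
  · exact theta_comm_of_lt rels z hj hk hlt
  · rw [heq]
  · exact (theta_comm_of_lt rels z hk hj hgt).symm

end Stmt3
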